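/- Let K be a commutative ring and let K[[t]] be the ring of formal power series in a variable t over K. For an integer j define the operator ∇_j on K[[t]] by ∇_j f = t·(df/dt) − j·f. Then for every integer i ≥ 1 and every f ∈ K[[t]], one has (∇_{i−1} ∘ ∇_{i−2} ∘ ⋯ ∘ ∇_1)(f) − (−1)^{i−1}·(i−1)!·f(0) ∈ t^i·K[[t]], where f(0) denotes the constant coefficient of f and, for i = 1, the composite is understood to be the identity map. -/

import Mathlib

open PowerSeries

/-- The operator `∇_j f = t·(df/dt) − j·f` on `K⟦t⟧`, for an integer `j`. -/
noncomputable def nablaT (K : Type*) [CommRing K] (j : ℤ) (f : K⟦X⟧) : K⟦X⟧ :=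
  PowerSeries.X * f.derivativeFun - j • f

/-- The composite `∇_k ∘ ∇_{k−1} ∘ ⋯ ∘ ∇_1` (with `∇_1` applied first); for `k = 0` it is the
identity map. -/
noncomputable def nablaTComp (K : Type*) [CommRing K] : ℕ → K⟦X⟧ → K⟦X⟧
  | 0, f => f
  | k + 1, f => nablaT K (k + 1) (nablaTComp K k f)

lemma coeff_X_mul_derivativeFun {K : Type*} [CommRing K] (f : K⟦X⟧) (n : ℕ) :
    PowerSeries.coeff n (PowerSeries.X * f.derivativeFun) = n • PowerSeries.coeff n f := by
  cases n with
  | zero => simp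
  | succ m =>
      rw [PowerSeries.coeff_succ_X_mul,
        show f.derivativeFun = PowerSeries.derivative K f from rfl, PowerSeries.coeff_derivative]
      ring

lemma coeff_nablaT {K : Type*} [CommRing K] (j : ℤ) (f : K⟦X⟧) (n : ℕ) :
    PowerSeries.coeff n (nablaT K j f) = ((n : ℤ) - j) • PowerSeries.coeff n f := by
  rw [nablaT, map_sub, coeff_X_mul_derivativeFun, map_zsmul, sub_smul, natCast_zsmul]

lemma coeff_nablaTComp {K : Type*} [CommRing K] (k : ℕ) (f : K⟦X⟧) (n : ℕ) :
    PowerSeries.coeff n (nablaTComp K k f) =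
      (∏ j ∈ Finset.range k, ((n : ℤ) - (j + 1))) • PowerSeries.coeff n f := by
  induction k with
  | zero => simp [nablaTComp]
  | succ m ih =>
      rw [show nablaTComp K (m + 1) f = nablaT K (m + 1) (nablaTComp K m f) from rfl,
        coeff_nablaT, ih, Finset.prod_range_succ, smul_smul, mul_comm]

/-- Let `K` be a commutative ring, `∇_j f = t·(df/dt) − j·f` on `K⟦t⟧`.
For every `i ≥ 1` and every `f ∈ K⟦t⟧`,
`(∇_{i−1} ∘ ⋯ ∘ ∇_1)(f) − (−1)^{i−1}·(i−1)!·f(0) ∈ tⁱ·K⟦t⟧`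
(where for `i = 1` the composite is the identity and `f(0)` is the constant coefficient). -/
theorem stmt3 (K : Type*) [CommRing K] (i : ℕ) (hi : 1 ≤ i) (f : K⟦X⟧) :
    ∃ g : K⟦X⟧,
      nablaTComp K (i - 1) f -
          ((-1 : K) ^ (i - 1) * (i - 1).factorial) •
            PowerSeries.C (PowerSeries.constantCoeff f) =
        PowerSeries.X ^ i * g := by
  refine (PowerSeries.X_pow_dvd_iff (n := i)).2 ?_
  intro m hm
  rw [map_sub, coeff_nablaTComp, map_smul]
  cases m with
  | zero =>
      have hprod : (∏ j ∈ Finset.range (i - 1), ((0 : ℤ) - (j + 1))) =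
          (-1) ^ (i - 1) * (i - 1).factorial := by
        induction (i - 1) with
        | zero => simp
        | succ m ih =>
            rw [Finset.prod_range_succ, ih, Nat.factorial_succ, pow_succ]
            push_cast
            ring
      rw [Nat.cast_zero, hprod]
      simp only [PowerSeries.coeff_zero_eq_constantCoeff, map_smul, PowerSeries.constantCoeff_C]
      rw [zsmul_eq_mul, smul_eq_mul]
      push_cast
      ring
  | succ m =>
      have hmem : m ∈ Finset.range (i - 1) := by
        rw [Finset.mem_range]; omega
      rw [Finset.prod_eq_zero hmem (by push_cast; ring), zero_smul,
        PowerSeries.coeff_C, if_neg (by omega)]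
      simp
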